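/- Let z = x + iy ∈ D (the standard fundamental domain, so |x| ≤ 1/2 and x² + y² ≥ 1), realized as z = i·g for the upper triangular matrix g = [[a, b],[0, 1/a]] ∈ SL₂(ℝ). Then for every nonzero integer vector (m, n), the squared Euclidean norm of g·(m,n)ᵗ satisfies (ma + nb)² + n²/a² ≥ a². -/

import Mathlib

/-- Key integer inequality: `m² − |mn| + n² ≥ 1` for nonzero `(m,n)`. -/
theorem int_key_ineq (m n : ℤ) (hmn : ¬(m = 0 ∧ n = 0)) :
    1 ≤ m ^ 2 - |m * n| + n ^ 2 := by
  rcases eq_or_ne (m * n) 0 with h | h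
  · rw [h, abs_zero]
    rcases mul_eq_zero.mp h with hm | hn
    · subst hm
      have hn : n ≠ 0 := by tauto
      have h1 := Int.one_le_abs hn
      nlinarith [sq_abs n]
    · subst hn
      have hm : m ≠ 0 := by tauto
      have h1 := Int.one_le_abs hm
      nlinarith [sq_abs m]
  · have hm : m ≠ 0 := fun h' => h (by simp [h'])
    have hn : n ≠ 0 := fun h' => h (by simp [h'])
    have h1 : 1 ≤ |m| := Int.one_le_abs hm
    have h2 : 1 ≤ |n| := Int.one_le_abs hn
    have habs : |m * n| = |m| * |n| := abs_mul m n
    nlinarith [sq_abs m, sq_abs n, sq_nonneg (|m| - |n|)]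

/-- If `z = i·g` lies in the standard fundamental domain, i.e. `|b/a| ≤ 1/2` and
`b²/a² + 1/a⁴ ≥ 1` for `g = [[a,b],[0,1/a]]`, then every nonzero integer vector `(m,n)`
satisfies `‖g·(m,n)ᵗ‖² = (ma + nb)² + n²/a² ≥ a²`. -/
theorem norm_sq_ge_of_fundamental_domain (a b : ℝ) (ha : a ≠ 0)
    (hD1 : |b / a| ≤ 1 / 2) (hD2 : 1 ≤ b ^ 2 / a ^ 2 + 1 / a ^ 4)
    (m n : ℤ) (hmn : ¬(m = 0 ∧ n = 0)) :
    a ^ 2 ≤ (m * a + n * b) ^ 2 + (n : ℝ) ^ 2 / a ^ 2 := by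
  have ha2 : (0:ℝ) < a ^ 2 := by positivity
  set u : ℝ := b / a with hu
  set s : ℝ := 1 / a ^ 2 with hs
  have hD2' : 1 ≤ u ^ 2 + s ^ 2 := by
    have : u ^ 2 = b ^ 2 / a ^ 2 := by rw [hu]; ring
    have h2 : s ^ 2 = 1 / a ^ 4 := by rw [hs]; field_simp
    linarith [this ▸ h2 ▸ hD2]
  have hk : (1:ℝ) ≤ (m:ℝ) ^ 2 - |(m:ℝ) * (n:ℝ)| + (n:ℝ) ^ 2 := by
    have := int_key_ineq m n hmn
    exact_mod_cast this
  have h2 : -|(m:ℝ) * (n:ℝ)| ≤ 2 * (m:ℝ) * (n:ℝ) * u := by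
    have habs : |2 * (m:ℝ) * (n:ℝ) * u| ≤ |(m:ℝ) * (n:ℝ)| := by
      have : |2 * (m:ℝ) * (n:ℝ) * u| = 2 * |(m:ℝ) * (n:ℝ)| * |u| := by
        rw [abs_mul, abs_mul, abs_mul, abs_two, abs_mul]
        ring
      rw [this]
      nlinarith [abs_nonneg ((m:ℝ) * (n:ℝ)), hD1]
    linarith [neg_abs_le (2 * (m:ℝ) * (n:ℝ) * u), abs_nonneg (2 * (m:ℝ) * (n:ℝ) * u)]
  have hmain : (1:ℝ) ≤ ((m:ℝ) + n * u) ^ 2 + (n:ℝ) ^ 2 * s ^ 2 := by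
    nlinarith [hk, h2, mul_le_mul_of_nonneg_left hD2' (sq_nonneg (n:ℝ))]
  have hrw : (m * a + n * b) ^ 2 + (n : ℝ) ^ 2 / a ^ 2
      = a ^ 2 * (((m:ℝ) + n * u) ^ 2 + (n:ℝ) ^ 2 * s ^ 2) := by
    rw [hu, hs]; field_simp
  rw [hrw]
  nlinarith [hmain, ha2]
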